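/- Let E: y² = x³ − x, let n = p₀p₁⋯p_k be a product of distinct odd primes, and let H₀⁺ = ℚ(√p₀, …, √p_k). Then the intersection of the 2-power torsion of E with E(H₀⁺) equals E[2]; that is, E(H₀⁺) contains no point of exact order 4. -/

import Mathlib

open WeierstrassCurve WeierstrassCurve.Affine

/-- The elliptic curve `E : y² = x³ − x` over `ℚ`. -/
def E : WeierstrassCurve.Affine ℚ := ⟨0, 0, 0, -1, 0⟩

open IntermediateField in

lemma sqrt_alg (q : ℕ) : IsAlgebraic ℚ (Real.sqrt q) := by
  refine ⟨Polynomial.X ^ 2 - Polynomial.C (q : ℚ), ?_, ?_⟩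
  · intro h
    have := congrArg (Polynomial.coeff · 2) h
    simp [Polynomial.coeff_X_pow] at this
  · have hq : (0:ℝ) ≤ (q:ℝ) := by positivity
    simp [Real.sq_sqrt hq]

lemma sqrt_not_mem_adjoin (s : Finset ℕ) (hs : ∀ q ∈ s, Nat.Prime q ∧ Odd q) :
    ∀ d : ℕ, Squarefree d → 2 ∣ d →
      Real.sqrt d ∉ IntermediateField.adjoin ℚ ((fun q : ℕ => Real.sqrt q) '' (s : Set ℕ)) := by
  induction s using Finset.induction_on with
  | empty =>
    intro d hsf hdvd hmem
    simp only [Finset.coe_empty, Set.image_empty, IntermediateField.adjoin_empty] at hmem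
    rw [IntermediateField.mem_bot] at hmem
    have hni : ¬ Irrational (Real.sqrt d) := by
      rintro hi
      exact hi hmem
    rw [irrational_sqrt_natCast_iff, not_not] at hni
    obtain ⟨r, hr⟩ := hni
    have h2r : 2 ∣ r := by
      have : (2:ℕ).Prime := Nat.prime_two
      rcases (Nat.Prime.dvd_mul this).mp (hr ▸ hdvd) with h | h <;> exact h
    obtain ⟨m, rfl⟩ := h2r
    have h4 : ¬ IsUnit (2:ℕ) := by decide
    exact h4 (hsf 2 ⟨m * m, by rw [hr]; ring⟩)
  | @insert p t hpt ih =>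
    intro d hsf hdvd hmem
    obtain ⟨hpprime, hpodd⟩ := hs p (Finset.mem_insert_self p t)
    have hst : ∀ q ∈ t, Nat.Prime q ∧ Odd q := fun q hq => hs q (Finset.mem_insert_of_mem hq)
    set A := IntermediateField.adjoin ℚ ((fun q : ℕ => Real.sqrt q) '' (t : Set ℕ)) with hA
    have ihA := ih hst
    have hp0 : (0:ℝ) ≤ (p:ℝ) := by positivity
    have hsqp : Real.sqrt p * Real.sqrt p = (p:ℝ) := Real.mul_self_sqrt hp0
    have hpA : ((p:ℕ):ℝ) ∈ A := by exact_mod_cast _root_.natCast_mem A p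
    -- the subalgebra of elements a + b √p
    let S : Subalgebra ℚ ℝ :=
      { carrier := {x : ℝ | ∃ a ∈ A, ∃ b ∈ A, x = a + b * Real.sqrt p}
        mul_mem' := by
          rintro x y ⟨a, ha, b, hb, rfl⟩ ⟨c, hc, e, he, rfl⟩
          refine ⟨a * c + b * e * p, add_mem (mul_mem ha hc) (mul_mem (mul_mem hb he) hpA),
            a * e + b * c, add_mem (mul_mem ha he) (mul_mem hb hc), ?_⟩
          linear_combination b * e * hsqp
        add_mem' := by
          rintro x y ⟨a, ha, b, hb, rfl⟩ ⟨c, hc, e, he, rfl⟩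
          exact ⟨a + c, add_mem ha hc, b + e, add_mem hb he, by ring⟩
        algebraMap_mem' := fun r =>
          ⟨algebraMap ℚ ℝ r, IntermediateField.algebraMap_mem A r, 0, zero_mem A, by ring⟩ }
    have hTS : Real.sqrt d ∈ S := by
      have halg : (IntermediateField.adjoin ℚ
          ((fun q : ℕ => Real.sqrt q) '' ((insert p t : Finset ℕ) : Set ℕ))).toSubalgebra
          = Algebra.adjoin ℚ ((fun q : ℕ => Real.sqrt q) '' ((insert p t : Finset ℕ) : Set ℕ)) :=
        IntermediateField.adjoin_toSubalgebra_of_isAlgebraic (by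
          rintro x ⟨q, _, rfl⟩; exact sqrt_alg q)
      have hmem' : Real.sqrt d ∈ Algebra.adjoin ℚ
          ((fun q : ℕ => Real.sqrt q) '' ((insert p t : Finset ℕ) : Set ℕ)) := by
        rw [← halg]; exact hmem
      refine Algebra.adjoin_le ?_ hmem'
      rintro x ⟨q, hq, rfl⟩
      rw [Finset.coe_insert] at hq
      rcases hq with rfl | hq
      · exact ⟨0, zero_mem A, 1, one_mem A, by ring⟩
      · exact ⟨Real.sqrt q, IntermediateField.subset_adjoin ℚ _ ⟨q, hq, rfl⟩, 0, zero_mem A, by ring⟩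
    obtain ⟨a, haA, b, hbA, heq⟩ := hTS
    have hd0 : (0:ℝ) ≤ (d:ℝ) := by positivity
    have h2 : a * a + b * b * (p:ℝ) + 2 * (a * b) * Real.sqrt p = (d:ℝ) := by
      calc a * a + b * b * (p:ℝ) + 2 * (a * b) * Real.sqrt p
          = (a + b * Real.sqrt p) * (a + b * Real.sqrt p) := by linear_combination (-(b*b)) * hsqp
        _ = Real.sqrt d * Real.sqrt d := by rw [heq]
        _ = (d:ℝ) := Real.mul_self_sqrt hd0
    by_cases hb : b = 0
    · subst hb
      rw [zero_mul, add_zero] at heq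
      exact ihA d hsf hdvd (heq ▸ haA)
    by_cases ha : a = 0
    · subst ha
      rw [zero_add] at heq
      have hp2 : ¬ (2 ∣ p) := by
        rcases hpodd with ⟨m, rfl⟩
        omega
      by_cases hpd : p ∣ d
      · obtain ⟨m, rfl⟩ := hpd
        have hmsf : Squarefree m := hsf.squarefree_of_dvd ⟨p, mul_comm p m⟩
        have hm2 : 2 ∣ m := by
          rcases (Nat.Prime.dvd_mul Nat.prime_two).mp hdvd with h | h
          · exact absurd h hp2
          · exact h
        have hsplit : Real.sqrt (p * m : ℕ) = Real.sqrt p * Real.sqrt m := by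
          push_cast
          exact Real.sqrt_mul hp0 _
        have hsp_ne : Real.sqrt p ≠ 0 := by
          refine ne_of_gt (Real.sqrt_pos.mpr ?_)
          exact_mod_cast hpprime.pos
        have hmb : Real.sqrt p * Real.sqrt m = Real.sqrt p * b := by
          rw [← hsplit, heq]; ring
        have : Real.sqrt m = b := mul_left_cancel₀ hsp_ne hmb
        exact ihA m hmsf hm2 (this ▸ hbA)
      · have hcop : Nat.Coprime d p := ((Nat.Prime.coprime_iff_not_dvd hpprime).mpr hpd).symm
        have hdpsf : Squarefree (d * p) := by
          rw [Nat.squarefree_mul hcop]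
          exact ⟨hsf, hpprime.squarefree⟩
        have hsplit : Real.sqrt (d * p : ℕ) = Real.sqrt d * Real.sqrt p := by
          push_cast
          exact Real.sqrt_mul hd0 _
        have hval : Real.sqrt (d * p : ℕ) = b * (p:ℝ) := by
          rw [hsplit, heq, mul_assoc, hsqp]
        exact ihA (d * p) hdpsf (hdvd.mul_right p) (hval ▸ mul_mem hbA hpA)
    · have hab : (2 : ℝ) * (a * b) ≠ 0 := by
        simp [ha, hb]
      have hspA : Real.sqrt p ∈ A := by
        have : Real.sqrt p = ((d:ℝ) - a * a - b * b * p) / (2 * (a * b)) := by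
          rw [eq_div_iff hab]
          linear_combination h2
        rw [this]
        exact div_mem (sub_mem (sub_mem (by exact_mod_cast _root_.natCast_mem A d)
          (mul_mem haA haA)) (mul_mem (mul_mem hbA hbA) hpA)) (by
            exact mul_mem (by exact_mod_cast _root_.natCast_mem A 2) (mul_mem haA hbA))
      exact ihA d hsf hdvd (heq ▸ add_mem haA (mul_mem hbA hspA))



section Key

variable {K : Type} [Field K] [Algebra ℚ K]

lemma Ea : (E.baseChange K).a₁ = 0 ∧ (E.baseChange K).a₂ = 0 ∧ (E.baseChange K).a₃ = 0 ∧
    (E.baseChange K).a₄ = -1 ∧ (E.baseChange K).a₆ = 0 := by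
  refine ⟨?_, ?_, ?_, ?_, ?_⟩ <;> simp [E, WeierstrassCurve.baseChange]

lemma E_negY (x y : K) : (E.baseChange K).toAffine.negY x y = -y := by
  rw [negY, Ea.1, Ea.2.2.1]; ring

lemma E_equation {x y : K} (h : (E.baseChange K).toAffine.Equation x y) :
    y ^ 2 = x ^ 3 - x := by
  rw [equation_iff, Ea.1, Ea.2.1, Ea.2.2.1, Ea.2.2.2.1, Ea.2.2.2.2] at h
  linear_combination h

lemma no_order_four [DecidableEq K] (hsq2 : ∀ u : K, u ^ 2 ≠ 2) (hsqm1 : ∀ u : K, u ^ 2 ≠ -1)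
    (Q : WeierstrassCurve.Affine.Point (WeierstrassCurve.Affine.baseChange E K)) (h : 2 • (2 • Q) = 0) : 2 • Q = 0 := by
  haveI : CharZero K := charZero_of_injective_algebraMap (algebraMap ℚ K).injective
  by_contra h2
  rw [two_nsmul] at h2
  rw [two_nsmul, two_nsmul] at h
  cases Q with
  | zero => exact h2 (zero_add 0)
  | @some x y hxy =>
    by_cases hy : y = (E.baseChange K).toAffine.negY x y
    · exact h2 (Point.add_self_of_Y_eq hy)
    rw [Point.add_self_of_Y_ne hy] at h h2
    set l := (E.baseChange K).toAffine.slope x x y y with hl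
    set x₃ := (E.baseChange K).toAffine.addX x x l with hx₃
    set y₃ := (E.baseChange K).toAffine.addY x x y l with hy₃
    have h₃ := nonsingular_add hxy hxy (fun h => hy h.2)
    by_cases hy3 : y₃ = (E.baseChange K).toAffine.negY x₃ y₃
    · -- this is the real case: extract the contradiction
      -- y₃ = -y₃ so y₃ = 0
      rw [E_negY] at hy3
      have hy30 : y₃ = 0 := by
        have h20 : (2 : K) * y₃ = 0 := by linear_combination hy3
        rcases mul_eq_zero.mp h20 with h | h
        · exact absurd h two_ne_zero
        · exact h
      -- x₃³ - x₃ = 0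
      have he3 : x₃ ^ 3 - x₃ = 0 := by
        have := E_equation h₃.1
        rw [← hx₃, ← hy₃, hy30] at this
        linear_combination -this
      -- y ≠ 0
      have hyne : y ≠ 0 := by
        intro h0
        apply hy
        rw [E_negY, h0, neg_zero]
      have h2y : (2 : K) * y ≠ 0 := mul_ne_zero two_ne_zero hyne
      have h2y' : y - -y ≠ 0 := by rw [sub_neg_eq_add, ← two_mul]; exact h2y
      -- slope formula
      have hls : l * (2 * y) = 3 * x ^ 2 - 1 := by
        rw [hl, slope_of_Y_ne rfl hy, E_negY, Ea.1, Ea.2.1, Ea.2.2.2.1]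
        rw [div_mul_eq_mul_div, div_eq_iff h2y']
        ring
      -- addX formula
      have hxx : x₃ = l ^ 2 - 2 * x := by
        rw [hx₃, addX, Ea.1, Ea.2.1]
        ring
      have he : y ^ 2 = x ^ 3 - x := E_equation hxy.1
      have key : (3 * x ^ 2 - 1) ^ 2 = (x₃ + 2 * x) * (2 * y) ^ 2 := by
        calc (3 * x ^ 2 - 1) ^ 2 = (l * (2 * y)) ^ 2 := by rw [hls]
          _ = l ^ 2 * (2 * y) ^ 2 := by ring
          _ = (x₃ + 2 * x) * (2 * y) ^ 2 := by rw [hxx]; ring_nf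
      -- x₃ ∈ {0, 1, -1}
      have hfac : x₃ * (x₃ - 1) * (x₃ + 1) = 0 := by linear_combination he3
      rcases mul_eq_zero.mp hfac with hfac | hc
      · rcases mul_eq_zero.mp hfac with h0 | h1
        · -- x₃ = 0 : (x² + 1)² = 0
          have : (x ^ 2 + 1) ^ 2 = 0 := by
            rw [h0] at key
            linear_combination key + 8 * x * he
          have := pow_eq_zero_iff (n := 2) (by norm_num) |>.mp this
          exact hsqm1 x (by linear_combination this)
        · -- x₃ = 1 : ((x-1)² - 2)² = 0
          have hx1 : x₃ = 1 := by linear_combination h1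
          have : ((x - 1) ^ 2 - 2) ^ 2 = 0 := by
            rw [hx1] at key
            linear_combination key + (8 * x + 4) * he
          have := pow_eq_zero_iff (n := 2) (by norm_num) |>.mp this
          exact hsq2 (x - 1) (by linear_combination this)
      · -- x₃ = -1 : ((x+1)² - 2)² = 0
        have hx1 : x₃ = -1 := by linear_combination hc
        have : ((x + 1) ^ 2 - 2) ^ 2 = 0 := by
          rw [hx1] at key
          linear_combination key + (8 * x - 4) * he
        have := pow_eq_zero_iff (n := 2) (by norm_num) |>.mp this
        exact hsq2 (x + 1) (by linear_combination this)
    · rw [Point.add_self_of_Y_ne hy3] at h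
      exact Point.some_ne_zero _ h

/-- for distinct odd primes `p₀, …, p_k` and the real multiquadratic field
`H₀⁺ = ℚ(√p₀, …, √p_k)`, the `2`-power torsion of `E(H₀⁺)` is exactly `E[2]`;
that is, `E(H₀⁺)` contains no point of exact order `4`. -/
theorem two_power_torsion_of_real_multiquadratic
    (k : ℕ) (p : Fin (k + 1) → ℕ) (hp : ∀ i, (p i).Prime) (hodd : ∀ i, Odd (p i))
    (hinj : Function.Injective p)
    (F : IntermediateField ℚ ℝ)
    (hF : F = IntermediateField.adjoin ℚ (Set.range fun i => Real.sqrt (p i))) :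
    ∀ P : WeierstrassCurve.Affine.Point (WeierstrassCurve.Affine.baseChange E ↥F), (∃ j : ℕ, 2 ^ j • P = 0) ↔ 2 • P = 0 := by
  have hF2 : Real.sqrt 2 ∉ F := by
    rw [hF]
    have himg : ((fun q : ℕ => Real.sqrt q) '' ((Finset.image p Finset.univ : Finset ℕ) : Set ℕ))
        = Set.range fun i => Real.sqrt (p i) := by
      rw [Finset.coe_image, Finset.coe_univ, Set.image_univ, ← Set.range_comp]
      rfl
    have hnot := sqrt_not_mem_adjoin (Finset.image p Finset.univ)
      (fun q hq => by
        obtain ⟨i, _, rfl⟩ := Finset.mem_image.mp hq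
        exact ⟨hp i, hodd i⟩)
      2 Nat.prime_two.squarefree dvd_rfl
    rw [himg] at hnot
    simpa using hnot
  have hsq2 : ∀ u : ↥F, u ^ 2 ≠ 2 := by
    intro u hu
    have hu' : ((u : ℝ)) ^ 2 = 2 := by
      rw [← SubmonoidClass.coe_pow, hu]
      norm_cast
    have hs : Real.sqrt 2 ^ 2 = 2 := Real.sq_sqrt (by norm_num)
    have hz : (Real.sqrt 2 - (u : ℝ)) * (Real.sqrt 2 + (u : ℝ)) = 0 := by
      linear_combination hs - hu'
    apply hF2
    rcases mul_eq_zero.mp hz with h | h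
    · have : Real.sqrt 2 = (u : ℝ) := by linarith
      rw [this]; exact u.2
    · have : Real.sqrt 2 = -(u : ℝ) := by linarith
      rw [this]; exact neg_mem u.2
  have hsqm1 : ∀ u : ↥F, u ^ 2 ≠ -1 := by
    intro u hu
    have hu' : ((u : ℝ)) ^ 2 = -1 := by
      rw [← SubmonoidClass.coe_pow, hu]
      push_cast
      ring
    nlinarith [sq_nonneg ((u : ℝ))]
  intro P
  constructor
  · rintro ⟨j, hj⟩
    induction j generalizing P with
    | zero =>
      rw [pow_zero, one_smul] at hj
      rw [hj]
      exact smul_zero 2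
    | succ j ihj =>
      rw [pow_succ, mul_smul] at hj
      exact no_order_four hsq2 hsqm1 P (ihj (2 • P) hj)
  · intro h2
    exact ⟨1, by rw [pow_one]; exact h2⟩
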